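/- A Feedback-Erlang block with parameters (b, σ, z), i.e., the b×b matrix M with diagonal entries −σ, superdiagonal entries σ, and entry zσ in position (b,1), has characteristic polynomial whose roots are the b solutions of (σ + x)^b = z·σ^b; its eigenvalue of maximal real part is real and equals −σ(1 − z^{1/b}). -/

import Mathlib

open Matrix

/-- A Feedback-Erlang block with parameters `(b, σ, z)` has eigenvalues exactly the solutions
of `(σ + x)^b = z σ^b`, and its eigenvalue of maximal real part is `-σ(1 - z^{1/b})`. -/
theorem stmt11 (b : ℕ) (hb : 1 ≤ b) (σ z : ℝ) (hσ : 0 < σ) (hz : z ∈ Set.Ico (0 : ℝ) 1)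
    (M : Matrix (Fin b) (Fin b) ℂ)
    (hM : M = Matrix.of fun i j : Fin b =>
      (if i = j then (-σ : ℂ) else 0) + (if (j : ℕ) = (i : ℕ) + 1 then (σ : ℂ) else 0) +
      (if (i : ℕ) = b - 1 ∧ (j : ℕ) = 0 then ((z : ℂ) * σ) else 0)) :
    (∀ x : ℂ, x ∈ spectrum ℂ M ↔ ((σ : ℂ) + x) ^ b = (z : ℂ) * (σ : ℂ) ^ b) ∧
    (((-σ * (1 - z ^ ((1 : ℝ) / b)) : ℝ) : ℂ) ∈ spectrum ℂ M) ∧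
    (∀ ν ∈ spectrum ℂ M, ν.re ≤ -σ * (1 - z ^ ((1 : ℝ) / b))) := by
  have hb0 : 0 < b := hb
  have hσC : (σ : ℂ) ≠ 0 := by exact_mod_cast hσ.ne'
  -- explicit formula for mulVec
  have hmv : ∀ (v : Fin b → ℂ) (i : Fin b), M.mulVec v i =
      -σ * v i + (if h : (i : ℕ) + 1 < b then (σ : ℂ) * v ⟨(i : ℕ) + 1, h⟩ else 0) +
      (if (i : ℕ) = b - 1 then ((z : ℂ) * σ) * v ⟨0, hb0⟩ else 0) := by
    intro v i
    subst hM
    simp only [Matrix.mulVec, dotProduct, Matrix.of_apply, add_mul,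
      Finset.sum_add_distrib]
    congr 1
    · congr 1
      · simp [ite_mul, Finset.sum_ite_eq]
      · by_cases h : (i : ℕ) + 1 < b
        · rw [dif_pos h, Finset.sum_eq_single_of_mem (⟨(i : ℕ) + 1, h⟩ : Fin b)
            (Finset.mem_univ _)]
          · simp
          · intro j _ hj
            rw [if_neg, zero_mul]
            intro hc
            exact hj (Fin.ext hc)
        · rw [dif_neg h]
          apply Finset.sum_eq_zero
          intro j _
          rw [if_neg, zero_mul]
          intro hc
          exact h (hc ▸ j.isLt)
    · by_cases h : (i : ℕ) = b - 1
      · rw [if_pos h, Finset.sum_eq_single_of_mem (⟨0, hb0⟩ : Fin b) (Finset.mem_univ _)]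
        · simp [h]
        · intro j _ hj
          rw [if_neg, zero_mul]
          rintro ⟨-, hc⟩
          exact hj (Fin.ext hc)
      · rw [if_neg h]
        apply Finset.sum_eq_zero
        intro j _
        rw [if_neg, zero_mul]
        rintro ⟨hc, -⟩
        exact h hc
  -- spectrum ↔ eigenvector
  have hspec : ∀ x : ℂ, x ∈ spectrum ℂ M ↔ ∃ v, v ≠ 0 ∧ M.mulVec v = x • v := by
    intro x
    rw [spectrum.mem_iff, Matrix.isUnit_iff_isUnit_det, isUnit_iff_ne_zero, not_ne_iff,
      ← Matrix.exists_mulVec_eq_zero_iff]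
    have hA : ∀ v : Fin b → ℂ,
        (algebraMap ℂ (Matrix (Fin b) (Fin b) ℂ) x - M).mulVec v = x • v - M.mulVec v := by
      intro v
      rw [Matrix.sub_mulVec]
      congr 1
      rw [Matrix.algebraMap_eq_diagonal]
      ext k
      simp [Matrix.mulVec_diagonal]
    constructor
    · rintro ⟨v, hv, hveq⟩
      exact ⟨v, hv, by rw [hA] at hveq; linear_combination (norm := module) -hveq⟩
    · rintro ⟨v, hv, hveq⟩
      exact ⟨v, hv, by rw [hA, hveq, sub_self]⟩
  -- the key characterization
  have key : ∀ x : ℂ, x ∈ spectrum ℂ M ↔ ((σ : ℂ) + x) ^ b = (z : ℂ) * (σ : ℂ) ^ b := by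
    intro x
    rw [hspec]
    obtain ⟨r, hrσ⟩ : ∃ r : ℂ, (σ : ℂ) * r = (σ : ℂ) + x := ⟨((σ : ℂ) + x) / σ, by field_simp⟩
    have hsplit : r ^ b = r * r ^ (b - 1) := by
      rw [← pow_succ']
      congr 1
      omega
    constructor
    · rintro ⟨v, hv, hveq⟩
      have hrow : ∀ i : Fin b, M.mulVec v i = x * v i := fun i => by
        rw [hveq]; rfl
      have hrec : ∀ k (hk : k < b), v ⟨k, hk⟩ = r ^ k * v ⟨0, hb0⟩ := by
        intro k
        induction k with
        | zero => intro hk; simp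
        | succ n ih =>
          intro hk
          have hn : n < b := Nat.lt_of_succ_lt hk
          have h := hrow ⟨n, hn⟩
          rw [hmv] at h
          simp only [Fin.val_mk] at h
          rw [dif_pos hk, if_neg (by omega : ¬ n = b - 1), add_zero] at h
          have h1 : (σ : ℂ) * v ⟨n + 1, hk⟩ = ((σ : ℂ) + x) * v ⟨n, hn⟩ := by
            linear_combination h
          have h2 : (σ : ℂ) * v ⟨n + 1, hk⟩ = (σ : ℂ) * (r ^ (n + 1) * v ⟨0, hb0⟩) := by
            rw [h1, ih hn, ← hrσ]; ring
          exact mul_left_cancel₀ hσC h2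
      have hv0 : v ⟨0, hb0⟩ ≠ 0 := by
        intro h0
        apply hv
        funext i
        have := hrec i.val i.isLt
        rw [h0, mul_zero] at this
        exact this
      have hlast := hrow ⟨b - 1, by omega⟩
      rw [hmv] at hlast
      simp only [Fin.val_mk] at hlast
      rw [dif_neg (by omega : ¬ b - 1 + 1 < b), if_pos trivial, add_zero] at hlast
      rw [hrec (b - 1) (by omega)] at hlast
      have hzr : (z : ℂ) * σ = ((σ : ℂ) + x) * r ^ (b - 1) :=
        mul_right_cancel₀ hv0 (by linear_combination hlast)
      have hzrb : (z : ℂ) = r ^ b := by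
        refine mul_left_cancel₀ hσC ?_
        rw [hsplit, ← mul_assoc, hrσ]
        linear_combination hzr
      calc ((σ : ℂ) + x) ^ b = ((σ : ℂ) * r) ^ b := by rw [hrσ]
        _ = (z : ℂ) * (σ : ℂ) ^ b := by rw [mul_pow, ← hzrb]; ring
    · intro hx
      rw [← hrσ, mul_pow] at hx
      have hrb : r ^ b = (z : ℂ) :=
        mul_left_cancel₀ (pow_ne_zero b hσC) (by linear_combination hx)
      refine ⟨fun k => r ^ (k : ℕ), ?_, ?_⟩
      · intro h0
        have := congrFun h0 ⟨0, hb0⟩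
        simp at this
      · funext i
        rw [hmv]
        show _ = x * r ^ (i : ℕ)
        by_cases h : (i : ℕ) + 1 < b
        · rw [dif_pos h, if_neg (by omega : ¬ (i : ℕ) = b - 1), add_zero]
          show -σ * r ^ (i : ℕ) + (σ : ℂ) * r ^ ((i : ℕ) + 1) = x * r ^ (i : ℕ)
          have : (σ : ℂ) * r ^ ((i : ℕ) + 1) = ((σ : ℂ) + x) * r ^ (i : ℕ) := by
            rw [pow_succ', ← mul_assoc, hrσ]
          rw [this]; ring
        · have hie : (i : ℕ) = b - 1 := by omega
          rw [dif_neg h, if_pos hie, add_zero]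
          have hzz : (z : ℂ) * σ = ((σ : ℂ) + x) * r ^ (i : ℕ) := by
            rw [← hrb, ← hrσ, hie, hsplit]; ring
          show -σ * r ^ (i : ℕ) + (z : ℂ) * σ * r ^ (0 : ℕ) = x * r ^ (i : ℕ)
          rw [pow_zero, mul_one, hzz]; ring
  -- real facts about z^(1/b)
  have hz0 : (0 : ℝ) ≤ z := hz.1
  have hzpow : (z ^ ((1 : ℝ) / b)) ^ b = z := by
    rw [← Real.rpow_natCast (z ^ ((1 : ℝ) / b)) b, ← Real.rpow_mul hz0]
    rw [one_div_mul_cancel (by exact_mod_cast hb0.ne' : (b : ℝ) ≠ 0), Real.rpow_one]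
  have hzp0 : (0 : ℝ) ≤ z ^ ((1 : ℝ) / b) := Real.rpow_nonneg hz0 _
  refine ⟨key, ?_, ?_⟩
  · rw [key]
    have : (σ : ℂ) + ((-σ * (1 - z ^ ((1 : ℝ) / b)) : ℝ) : ℂ) = ((σ * z ^ ((1 : ℝ) / b) : ℝ) : ℂ) := by
      push_cast
      ring
    rw [this]
    rw [← Complex.ofReal_pow, mul_pow, hzpow]
    push_cast
    ring
  · intro ν hν
    rw [key] at hν
    have habs : ‖(σ : ℂ) + ν‖ = σ * z ^ ((1 : ℝ) / b) := by
      have h1 : ‖(σ : ℂ) + ν‖ ^ b = (σ * z ^ ((1 : ℝ) / b)) ^ b := by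
        rw [← norm_pow, hν, norm_mul, norm_pow]
        rw [Complex.norm_real, Complex.norm_real, Real.norm_of_nonneg hz0, Real.norm_of_nonneg hσ.le]
        rw [mul_pow, hzpow]
        ring
      exact (pow_left_inj₀ (norm_nonneg _) (by positivity) hb0.ne').mp h1
    have hre : ((σ : ℂ) + ν).re ≤ ‖(σ : ℂ) + ν‖ := Complex.re_le_norm _
    rw [habs] at hre
    simp only [Complex.add_re, Complex.ofReal_re] at hre
    linarith
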